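/- Let n ≥ 3 and let D = aH − b_1E_1 − ⋯ − b_nE_n ∈ ℤ^{1,n} satisfy D·D = −2 and K·D = 0 (equivalently, b_1 + ⋯ + b_n = 3a and b_1² + ⋯ + b_n² = a² + 2), with a > 0 and b_1 ≥ b_2 ≥ ⋯ ≥ b_n ≥ 0. Then a < b_1 + b_2 + b_3. Moreover, if D ≠ H − E_1 − E_2 − E_3, then b_1 + b_2 + b_3 ≤ 2a; consequently the Cremona reflection image s_{l_0}(D) = D + (D·l_0)l_0, where l_0 = H − E_1 − E_2 − E_3, has H-coefficient 2a − b_1 − b_2 − b_3 satisfying 0 ≤ 2a − b_1 − b_2 − b_3 < a. (The descent inequalities used in the proof of Lemma 2.17, following Proposition 4.10 of Li–Wu.) -/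
import Mathlib


open Finset

set_option maxHeartbeats 1600000 in
/-- The descent inequalities used in the proof of Lemma 2.17
(following Li–Wu, Proposition 4.10). Let `D = aH - b_1E_1 - ⋯ - b_nE_n ∈ ℤ^{1,n}`
with `D·D = -2` and `K·D = 0` (equivalently `b_1 + ⋯ + b_n = 3a` and
`b_1² + ⋯ + b_n² = a² + 2`), `a > 0` and `b_1 ≥ b_2 ≥ ⋯ ≥ b_n ≥ 0`.
Then `a < b_1 + b_2 + b_3`, and if `D ≠ H - E_1 - E_2 - E_3` then
`b_1 + b_2 + b_3 ≤ 2a`; consequently the `H`-coefficient `2a - b_1 - b_2 - b_3`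
of the Cremona reflection image `s_{l_0}(D)` satisfies
`0 ≤ 2a - b_1 - b_2 - b_3 < a`.  Here `b i` denotes `b_{i+1}`, so `b_1 = b ⟨0,_⟩`. -/
theorem cremona_descent_inequalities
    (n : ℕ) (hn : 3 ≤ n) (a : ℤ) (b : Fin n → ℤ)
    (hsum : ∑ i, b i = 3 * a)
    (hsq : ∑ i, (b i) ^ 2 = a ^ 2 + 2)
    (ha : 0 < a)
    (hmono : Antitone b)
    (hnn : ∀ i, 0 ≤ b i) :
    a < b ⟨0, by omega⟩ + b ⟨1, by omega⟩ + b ⟨2, by omega⟩ ∧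
    ((¬ (a = 1 ∧ ∀ i : Fin n, b i = if (i : ℕ) < 3 then 1 else 0)) →
      b ⟨0, by omega⟩ + b ⟨1, by omega⟩ + b ⟨2, by omega⟩ ≤ 2 * a ∧
      0 ≤ 2 * a - (b ⟨0, by omega⟩ + b ⟨1, by omega⟩ + b ⟨2, by omega⟩) ∧
      2 * a - (b ⟨0, by omega⟩ + b ⟨1, by omega⟩ + b ⟨2, by omega⟩) < a) := by
  have h0 : (0:ℕ) < n := by omega
  have h1 : (1:ℕ) < n := by omega
  have h2 : (2:ℕ) < n := by omega
  set i0 : Fin n := ⟨0, h0⟩ with hi0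
  set i1 : Fin n := ⟨1, h1⟩ with hi1
  set i2 : Fin n := ⟨2, h2⟩ with hi2
  have hset : (univ.filter (fun i : Fin n => (i:ℕ) < 3)) = {i0, i1, i2} := by
    ext i
    simp only [mem_filter, mem_univ, true_and, mem_insert, mem_singleton, Fin.ext_iff, hi0, hi1, hi2]
    omega
  have hsplit : ∀ f : Fin n → ℤ, ∑ i, f i
      = f i0 + f i1 + f i2 + ∑ i ∈ univ.filter (fun i : Fin n => ¬ (i:ℕ) < 3), f i := by
    intro f
    rw [← Finset.sum_filter_add_sum_filter_not univ (fun i : Fin n => (i:ℕ) < 3) f, hset]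
    have d01 : i0 ≠ i1 := by simp [Fin.ext_iff, hi0, hi1]
    have d02 : i0 ≠ i2 := by simp [Fin.ext_iff, hi0, hi2]
    have d12 : i1 ≠ i2 := by simp [Fin.ext_iff, hi1, hi2]
    rw [Finset.sum_insert (by simp [d01, d02]), Finset.sum_insert (by simp [d12]),
      Finset.sum_singleton]
    ring
  set x := b i0 with hx
  set y := b i1 with hy
  set z := b i2 with hz
  set S := univ.filter (fun i : Fin n => ¬ (i:ℕ) < 3) with hS
  have hbz : ∀ i ∈ S, 0 ≤ b i ∧ b i ≤ z := by
    intro i hi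
    refine ⟨hnn i, hmono ?_⟩
    simp only [hS, mem_filter] at hi
    exact Fin.mk_le_of_le_val (by omega)
  have hT0 : 0 ≤ ∑ i ∈ S, b i := Finset.sum_nonneg fun i hi => (hbz i hi).1
  have hTsq0 : 0 ≤ ∑ i ∈ S, (b i)^2 := Finset.sum_nonneg fun i hi => sq_nonneg _
  have hkey : ∑ i ∈ S, (b i)^2 ≤ z * ∑ i ∈ S, b i := by
    rw [Finset.mul_sum]
    refine Finset.sum_le_sum fun i hi => ?_
    have := hbz i hi
    nlinarith [this.1, this.2]
  have hxy : y ≤ x := hmono (by simp [Fin.le_def, hi0, hi1])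
  have hyz : z ≤ y := hmono (by simp [Fin.le_def, hi1, hi2])
  have hz0 : 0 ≤ z := hnn i2
  have hsum' := hsplit b
  have hsq' := hsplit (fun i => (b i)^2)
  rw [hsum] at hsum'
  rw [hsq] at hsq'
  -- x ≤ a
  have hxa : x ≤ a := by nlinarith [hTsq0, sq_nonneg y, sq_nonneg z]
  have part1 : a < x + y + z := by
    by_contra hcon
    push_neg at hcon
    nlinarith [hkey, mul_nonneg hz0 (by linarith : (0:ℤ) ≤ a - (x+y+z)),
      mul_nonneg hz0 (by linarith : (0:ℤ) ≤ x + y - 2*z),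
      mul_nonneg (by linarith : (0:ℤ) ≤ a - (x+y+z)) (by linarith : (0:ℤ) ≤ x + y - 2*z),
      mul_nonneg (sub_nonneg.2 hxy) (sub_nonneg.2 hyz),
      mul_nonneg (by linarith : (0:ℤ) ≤ x - z) (by linarith : (0:ℤ) ≤ a - x)]
  refine ⟨part1, fun hne => ?_⟩
  have part2 : x + y + z ≤ 2 * a := by
    by_contra hcon
    push_neg at hcon
    have hq3 : x^2+y^2+z^2 ≤ a^2+2 := by linarith
    have h9 : (x+y+z)^2 ≤ 3*(x^2+y^2+z^2) := by
      nlinarith [sq_nonneg (x-y), sq_nonneg (y-z), sq_nonneg (x-z)]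
    have hle1 : a ≤ 1 := by
      nlinarith [mul_nonneg (by linarith : (0:ℤ) ≤ x+y+z - (2*a+1)) (by linarith : (0:ℤ) ≤ x+y+z + 2*a+1), mul_pos ha ha]
    have ha1 : a = 1 := by omega
    subst ha1
    have hx1 : x = 1 ∧ y = 1 ∧ z = 1 := by
      have hxle : x ≤ 1 := by nlinarith [hq3, sq_nonneg y, sq_nonneg z, hz0]
      omega
    obtain ⟨hx1, hy1, hz1⟩ := hx1
    have hT : ∑ i ∈ S, b i = 0 := by omega
    have hzero : ∀ i ∈ S, b i = 0 :=
      (Finset.sum_eq_zero_iff_of_nonneg fun i hi => (hbz i hi).1).1 hT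
    apply hne
    refine ⟨rfl, fun i => ?_⟩
    by_cases hlt : (i:ℕ) < 3
    · have : i = i0 ∨ i = i1 ∨ i = i2 := by
        simp only [Fin.ext_iff, hi0, hi1, hi2]; omega
      simp only [hlt, if_true]
      rcases this with h|h|h <;> rw [h]
      · exact hx1
      · exact hy1
      · exact hz1
    · simp only [hlt, if_false]
      exact hzero i (by simp [hS]; omega)
  exact ⟨part2, by omega, by omega⟩
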